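/- In the lower-bound graph of the size lower bound theorem, for any vertex t ∈ X and any s-t path P beginning with edge (s, r_i), the increment function I assigning I(s,r_j) = i + 1 − j for 1 ≤ j < i, I(e) = 1 for each tree edge (u,v) ∈ T_i with u on P but v not on P, and 0 otherwise, satisfies ∑_e I(e) ≤ k, and under w' = w + I the path P is the unique minimum-weight s-t path: w'(P) = w(P) while every other s-t path has weight at least k + i + 1 > w'(P). -/

import Mathlib

variable {V : Type*}

/-- A directed walk in the digraph with edge set `E`, from `s` to `t`,
given as the list of visited vertices. -/
def IsWalk (E : Set (V × V)) (s t : V) (p : List V) : Prop :=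
  p.head? = some s ∧ p.getLast? = some t ∧ p.Chain' (fun a b => (a, b) ∈ E)

/-- The list of edges traversed by a walk. -/
def edgesOf (p : List V) : List (V × V) := p.zip p.tail

/-- Total weight of a walk. -/
def wt {α : Type*} [AddCommMonoid α] (w : V × V → α) (p : List V) : α :=
  ((edgesOf p).map w).sum

/-- `d` is the (attained) minimum weight of a directed `s`-`t` walk. -/
def IsDist {α : Type*} [AddCommMonoid α] [Preorder α] (E : Set (V × V)) (w : V × V → α)
    (s t : V) (d : α) : Prop :=
  (∃ p, IsWalk E s t p ∧ wt w p = d) ∧ ∀ p, IsWalk E s t p → d ≤ wt w p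

attribute [local instance] Classical.propDecidable

/-- `Ssum i = ∑_{j=2}^{i} j`. -/
def Ssum (i : ℕ) : ℕ := ∑ j ∈ Finset.Icc 2 i, j

/-- `hgt k i = k - ∑_{j=2}^{i} j`, the height of the `i`-th tree. -/
def hgt (k i : ℕ) : ℕ := k - Ssum i

/-- Vertices of the lower-bound graph: the source `s`, the nodes of the `l`
full binary trees (tree `i` has nodes indexed heap-style by
`1 ≤ m < 2^(h_i+1)`, index `0` unused), and the `n` vertices of `X`. -/
abbrev Vlb (k l n : ℕ) :=
  Unit ⊕ ((Σ i : Fin l, Fin (2 ^ (hgt k (i.val + 1) + 1))) ⊕ Fin n)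

def src (k l n : ℕ) : Vlb k l n := Sum.inl ()

def tnode (k l n : ℕ) (i : Fin l) (m : ℕ) : Vlb k l n :=
  Sum.inr (Sum.inl ⟨i, ⟨m % 2 ^ (hgt k (i.val + 1) + 1),
    Nat.mod_lt _ (by positivity)⟩⟩)

def xnode (k l n : ℕ) (x : Fin n) : Vlb k l n := Sum.inr (Sum.inr x)

/-- Edges: `s → r_i` (heap index `1`), heap-style tree edges `m → 2m, 2m+1`,
and an edge from every leaf (heap index in `[2^{h_i}, 2^{h_i+1})`) to every
vertex of `X`. -/
def Elb (k l n : ℕ) : Set (Vlb k l n × Vlb k l n) :=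
  {p | (∃ i : Fin l, p = (src k l n, tnode k l n i 1))
    ∨ (∃ (i : Fin l) (m m' : ℕ), 1 ≤ m ∧ m < 2 ^ hgt k (i.val + 1) ∧
        (m' = 2 * m ∨ m' = 2 * m + 1) ∧ p = (tnode k l n i m, tnode k l n i m'))
    ∨ (∃ (i : Fin l) (m : ℕ) (x : Fin n), 2 ^ hgt k (i.val + 1) ≤ m ∧
        m < 2 ^ (hgt k (i.val + 1) + 1) ∧ p = (tnode k l n i m, xnode k l n x))}

/-- Weights: `w(s, r_i) = ∑_{j=2}^{i} j + i` (with `i` one-based), and all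
other edges have weight `1`. -/
def wlb (k l n : ℕ) : Vlb k l n × Vlb k l n → ℕ := fun p =>
  match p with
  | (Sum.inl _, Sum.inr (Sum.inl ⟨i, _⟩)) => Ssum (i.val + 1) + (i.val + 1)
  | _ => 1

/-- The increment function of the lower-bound argument: `I(s,r_j) = i + 1 - j`
for `j < i` (one-based), `I(e) = 1` for each tree edge of `T_i` leaving the
chosen root-to-leaf path (`m` an ancestor of `mleaf`, its child `m'` not), and
`0` elsewhere. -/
noncomputable def Ilb (k l n : ℕ) (i : Fin l) (mleaf : ℕ) :
    Vlb k l n × Vlb k l n → ℕ := fun p =>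
  match p with
  | (Sum.inl _, Sum.inr (Sum.inl ⟨j, m⟩)) =>
      if m.val = 1 ∧ j.val < i.val then i.val + 1 - j.val else 0
  | (Sum.inr (Sum.inl ⟨j, m⟩), Sum.inr (Sum.inl ⟨j', m'⟩)) =>
      if j = i ∧ j' = i ∧ (m'.val = 2 * m.val ∨ m'.val = 2 * m.val + 1) ∧
          (∃ d ≤ hgt k (i.val + 1), mleaf / 2 ^ d = m.val) ∧
          ¬(∃ d ≤ hgt k (i.val + 1), mleaf / 2 ^ d = m'.val)
      then 1 else 0
  | _ => 0

section AuxA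

lemma Ssum_mono {a b : ℕ} (h : a ≤ b) : Ssum a ≤ Ssum b :=
  Finset.sum_le_sum_of_subset (Finset.Icc_subset_Icc_right h)

lemma Ssum_succ (N : ℕ) : Ssum (N + 2) = Ssum (N + 1) + (N + 2) := by
  unfold Ssum
  rw [Finset.sum_Icc_succ_top (by omega)]

lemma sum_range_Ssum (N : ℕ) : ∑ j ∈ Finset.range N, (N + 1 - j) = Ssum (N + 1) := by
  induction N with
  | zero => simp [Ssum]
  | succ N ih =>
    rw [Finset.sum_range_succ]
    have hc : ∀ j ∈ Finset.range N, (N + 1 + 1 - j) = (N + 1 - j) + 1 := by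
      intro j hj; simp at hj; omega
    rw [Finset.sum_congr rfl hc, Finset.sum_add_distrib, ih, Finset.sum_const,
      Finset.card_range, Ssum_succ]
    simp; omega

lemma div_pow_range {h mleaf : ℕ} (hm1 : 2 ^ h ≤ mleaf) (hm2 : mleaf < 2 ^ (h + 1))
    {d : ℕ} (hd : d ≤ h) :
    2 ^ (h - d) ≤ mleaf / 2 ^ d ∧ mleaf / 2 ^ d < 2 ^ (h - d + 1) := by
  constructor
  · rw [Nat.le_div_iff_mul_le (by positivity), ← pow_add]
    calc 2 ^ (h - d + d) = 2 ^ h := by congr 1; omega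
    _ ≤ mleaf := hm1
  · rw [Nat.div_lt_iff_lt_mul (by positivity : 0 < 2 ^ d), ← pow_add]
    calc mleaf < 2 ^ (h + 1) := hm2
    _ = 2 ^ (h - d + 1 + d) := by congr 1; omega

lemma div_pow_inj {h mleaf : ℕ} (hm1 : 2 ^ h ≤ mleaf) (hm2 : mleaf < 2 ^ (h + 1))
    {d e : ℕ} (hd : d ≤ h) (he : e ≤ h) (heq : mleaf / 2 ^ d = mleaf / 2 ^ e) : d = e := by
  by_contra hne
  wlog hlt : d < e generalizing d e
  · exact this he hd heq.symm (Ne.symm hne) (by omega)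
  · have h1 := (div_pow_range hm1 hm2 hd).1
    have h2 := (div_pow_range hm1 hm2 he).2
    have : 2 ^ (h - e + 1) ≤ 2 ^ (h - d) := Nat.pow_le_pow_right (by norm_num) (by omega)
    omega

lemma div_pow_succ (mleaf e : ℕ) : mleaf / 2 ^ (e + 1) = (mleaf / 2 ^ e) / 2 := by
  rw [Nat.div_div_eq_div_mul, ← pow_succ]

lemma div_pow_child (mleaf e : ℕ) :
    mleaf / 2 ^ e = 2 * (mleaf / 2 ^ (e + 1)) ∨
    mleaf / 2 ^ e = 2 * (mleaf / 2 ^ (e + 1)) + 1 := by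
  rw [div_pow_succ]
  have h1 := Nat.div_add_mod (mleaf / 2 ^ e) 2
  have h2 : (mleaf / 2 ^ e) % 2 < 2 := Nat.mod_lt _ (by norm_num)
  omega

lemma tnode_inj {k l n : ℕ} {j j' : Fin l} {m m' : ℕ}
    (hm : m < 2 ^ (hgt k (j.val + 1) + 1)) (hm' : m' < 2 ^ (hgt k (j'.val + 1) + 1))
    (h : tnode k l n j m = tnode k l n j' m') : j = j' ∧ m = m' := by
  simp only [tnode, Sum.inr.injEq, Sum.inl.injEq, Sigma.mk.inj_iff] at h
  obtain ⟨h1, h2⟩ := h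
  subst h1
  rw [heq_iff_eq, Fin.mk.injEq, Nat.mod_eq_of_lt hm, Nat.mod_eq_of_lt hm'] at h2
  exact ⟨rfl, h2⟩

lemma src_ne_tnode {k l n : ℕ} {j : Fin l} {m : ℕ} : src k l n ≠ tnode k l n j m := by
  simp [src, tnode]

lemma tnode_ne_xnode {k l n : ℕ} {j : Fin l} {m : ℕ} {x : Fin n} :
    tnode k l n j m ≠ xnode k l n x := by
  simp [tnode, xnode]

lemma xnode_inj {k l n : ℕ} {x y : Fin n} (h : xnode k l n x = xnode k l n y) : x = y := by
  simpa [xnode] using h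

end AuxA

section AuxB
variable {k l n : ℕ}

lemma edge_from_src {b : Vlb k l n} (he : (src k l n, b) ∈ Elb k l n) :
    ∃ j : Fin l, b = tnode k l n j 1 := by
  rcases he with ⟨i₀, hp⟩ | ⟨i₀, m₀, m₀', _, _, _, hp⟩ | ⟨i₀, m₀, x, _, _, hp⟩
  · rw [Prod.mk.injEq] at hp; exact ⟨i₀, hp.2⟩
  · rw [Prod.mk.injEq] at hp; exact absurd hp.1 src_ne_tnode
  · rw [Prod.mk.injEq] at hp; exact absurd hp.1 src_ne_tnode

lemma edge_from_xnode {x : Fin n} {b : Vlb k l n} (he : (xnode k l n x, b) ∈ Elb k l n) :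
    False := by
  rcases he with ⟨i₀, hp⟩ | ⟨i₀, m₀, m₀', _, _, _, hp⟩ | ⟨i₀, m₀, x₀, _, _, hp⟩ <;>
    rw [Prod.mk.injEq] at hp
  · exact absurd hp.1 (by simp [xnode, src])
  · exact tnode_ne_xnode hp.1.symm
  · exact tnode_ne_xnode hp.1.symm

lemma edge_from_tnode {j : Fin l} {m : ℕ} {b : Vlb k l n}
    (hm : m < 2 ^ (hgt k (j.val + 1) + 1))
    (he : (tnode k l n j m, b) ∈ Elb k l n) :
    (1 ≤ m ∧ m < 2 ^ hgt k (j.val + 1) ∧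
      ∃ m', (m' = 2 * m ∨ m' = 2 * m + 1) ∧ b = tnode k l n j m')
    ∨ (2 ^ hgt k (j.val + 1) ≤ m ∧ ∃ x, b = xnode k l n x) := by
  rcases he with ⟨i₀, hp⟩ | ⟨i₀, m₀, m₀', h1, h2, h3, hp⟩ | ⟨i₀, m₀, x, h1, h2, hp⟩ <;>
    rw [Prod.mk.injEq] at hp
  · exact absurd hp.1.symm src_ne_tnode
  · obtain ⟨rfl, rfl⟩ := tnode_inj hm
      (lt_trans h2 (Nat.pow_lt_pow_right (by norm_num) (by omega))) hp.1
    exact Or.inl ⟨h1, h2, m₀', h3, hp.2⟩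
  · obtain ⟨rfl, rfl⟩ := tnode_inj hm h2 hp.1
    exact Or.inr ⟨h1, ⟨x, hp.2⟩⟩

lemma wlb_src (j : Fin l) (m : ℕ) :
    wlb k l n (src k l n, tnode k l n j m) = Ssum (j.val + 1) + (j.val + 1) := rfl

lemma wlb_tree (j j' : Fin l) (m m' : ℕ) :
    wlb k l n (tnode k l n j m, tnode k l n j' m') = 1 := rfl

lemma wlb_leaf (j : Fin l) (m : ℕ) (x : Fin n) :
    wlb k l n (tnode k l n j m, xnode k l n x) = 1 := rfl

lemma wlb_ge_one (p : Vlb k l n × Vlb k l n) : 1 ≤ wlb k l n p := by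
  unfold wlb
  split
  · omega
  · exact le_refl 1

variable {i : Fin l} {mleaf : ℕ}

lemma Ilb_leaf (j : Fin l) (m : ℕ) (x : Fin n) :
    Ilb k l n i mleaf (tnode k l n j m, xnode k l n x) = 0 := rfl

lemma Ilb_src_eq (j : Fin l) (m : ℕ) (hm : m < 2 ^ (hgt k (j.val + 1) + 1)) :
    Ilb k l n i mleaf (src k l n, tnode k l n j m) =
      if m = 1 ∧ j.val < i.val then i.val + 1 - j.val else 0 := by
  have h : Ilb k l n i mleaf (src k l n, tnode k l n j m) =
      if m % 2 ^ (hgt k (j.val + 1) + 1) = 1 ∧ j.val < i.val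
      then i.val + 1 - j.val else 0 := rfl
  rw [h, Nat.mod_eq_of_lt hm]

lemma Ilb_tree_eq (j j' : Fin l) (m m' : ℕ)
    (hm : m < 2 ^ (hgt k (j.val + 1) + 1)) (hm' : m' < 2 ^ (hgt k (j'.val + 1) + 1)) :
    Ilb k l n i mleaf (tnode k l n j m, tnode k l n j' m') =
      if j = i ∧ j' = i ∧ (m' = 2 * m ∨ m' = 2 * m + 1) ∧
          (∃ d ≤ hgt k (i.val + 1), mleaf / 2 ^ d = m) ∧
          ¬(∃ d ≤ hgt k (i.val + 1), mleaf / 2 ^ d = m')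
      then 1 else 0 := by
  have h : Ilb k l n i mleaf (tnode k l n j m, tnode k l n j' m') =
      if j = i ∧ j' = i ∧
          (m' % 2 ^ (hgt k (j'.val + 1) + 1) = 2 * (m % 2 ^ (hgt k (j.val + 1) + 1)) ∨
            m' % 2 ^ (hgt k (j'.val + 1) + 1) = 2 * (m % 2 ^ (hgt k (j.val + 1) + 1)) + 1) ∧
          (∃ d ≤ hgt k (i.val + 1), mleaf / 2 ^ d = m % 2 ^ (hgt k (j.val + 1) + 1)) ∧
          ¬(∃ d ≤ hgt k (i.val + 1), mleaf / 2 ^ d = m' % 2 ^ (hgt k (j'.val + 1) + 1))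
      then 1 else 0 := rfl
  rw [h, Nat.mod_eq_of_lt hm, Nat.mod_eq_of_lt hm']

lemma wt_cons' {V : Type*} (w : V × V → ℕ) (a b : V) (r : List V) :
    wt w (a :: b :: r) = w (a, b) + wt w (b :: r) := by
  simp [wt, edgesOf]

lemma wt_pair {V : Type*} (w : V × V → ℕ) (a b : V) : wt w [a, b] = w (a, b) := by
  simp [wt, edgesOf]

end AuxB

section AuxC
variable (k l n : ℕ) (i : Fin l) (mleaf : ℕ) (t : Fin n)

def tailP (d : ℕ) : List (Vlb k l n) :=
  ((List.range' d (hgt k (i.val + 1) + 1 - d)).map fun dd =>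
    tnode k l n i (mleaf / 2 ^ (hgt k (i.val + 1) - dd))) ++ [xnode k l n t]

variable {k l n i mleaf t}

lemma tailP_cons {d : ℕ} (hd : d ≤ hgt k (i.val + 1)) :
    tailP k l n i mleaf t d =
      tnode k l n i (mleaf / 2 ^ (hgt k (i.val + 1) - d)) ::
        tailP k l n i mleaf t (d + 1) := by
  unfold tailP
  rw [show hgt k (i.val + 1) + 1 - d = (hgt k (i.val + 1) - d) + 1 by omega,
    List.range'_succ,
    show hgt k (i.val + 1) + 1 - (d + 1) = hgt k (i.val + 1) - d from by omega]
  simp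

lemma tailP_last (d : ℕ) :
    (tailP k l n i mleaf t d).getLast? = some (xnode k l n t) := by
  unfold tailP; exact List.getLast?_concat

lemma tailP_head {d : ℕ} (hd : d ≤ hgt k (i.val + 1)) :
    (tailP k l n i mleaf t d).head? =
      some (tnode k l n i (mleaf / 2 ^ (hgt k (i.val + 1) - d))) := by
  rw [tailP_cons hd]; rfl

lemma tailP_top : tailP k l n i mleaf t (hgt k (i.val + 1)) =
    [tnode k l n i mleaf, xnode k l n t] := by
  unfold tailP
  rw [show hgt k (i.val + 1) + 1 - hgt k (i.val + 1) = 1 by omega, List.range'_one]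
  simp

lemma wt_cons_head {V : Type*} (w : V × V → ℕ) (a b : V) (r : List V)
    (h : r.head? = some b) : wt w (a :: r) = w (a, b) + wt w r := by
  cases r with
  | nil => simp at h
  | cons c r' => simp at h; subst h; exact wt_cons' w a c r'

lemma tailP_props (hm1 : 2 ^ hgt k (i.val + 1) ≤ mleaf)
    (hm2 : mleaf < 2 ^ (hgt k (i.val + 1) + 1)) :
    ∀ c d, d + c = hgt k (i.val + 1) →
      List.Chain' (fun a b => (a, b) ∈ Elb k l n) (tailP k l n i mleaf t d) ∧
      wt (wlb k l n) (tailP k l n i mleaf t d) = c + 1 ∧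
      wt (fun p => wlb k l n p + Ilb k l n i mleaf p) (tailP k l n i mleaf t d)
        = c + 1 := by
  intro c
  induction c with
  | zero =>
    intro d hd
    have hdH : d = hgt k (i.val + 1) := by omega
    subst hdH
    rw [tailP_top]
    refine ⟨?_, ?_, ?_⟩
    · unfold List.Chain'; rw [List.isChain_pair]
      exact Or.inr (Or.inr ⟨i, mleaf, t, hm1, hm2, rfl⟩)
    · rw [wt_pair, wlb_leaf]
    · rw [wt_pair]; rw [wlb_leaf, Ilb_leaf]
  | succ c ih =>
    intro d hd
    have hdH : d + 1 ≤ hgt k (i.val + 1) := by omega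
    obtain ⟨ihc, ihw, ihw'⟩ := ih (d + 1) (by omega)
    set H := hgt k (i.val + 1) with hH
    have hHd : H - d = (H - (d + 1)) + 1 := by omega
    have hchild := div_pow_child mleaf (H - (d + 1))
    rw [← hHd] at hchild
    have hrm := div_pow_range hm1 hm2 (show H - d ≤ H by omega)
    have hrm' := div_pow_range hm1 hm2 (show H - (d + 1) ≤ H by omega)
    have hd1 : H - (H - d) = d := by omega
    have hd2 : H - (H - (d + 1)) = d + 1 := by omega
    rw [hd1] at hrm; rw [hd2] at hrm'
    set m := mleaf / 2 ^ (H - d) with hm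
    set m' := mleaf / 2 ^ (H - (d + 1)) with hm'
    have hedge : (tnode k l n i m, tnode k l n i m') ∈ Elb k l n := by
      refine Or.inr (Or.inl ⟨i, m, m', ?_, ?_, ?_, rfl⟩)
      · have := Nat.one_le_two_pow (n := d); omega
      · show m < 2 ^ H
        have : 2 ^ (d + 1) ≤ 2 ^ H := Nat.pow_le_pow_right (by norm_num) (by omega)
        omega
      · omega
    have hI : Ilb k l n i mleaf (tnode k l n i m, tnode k l n i m') = 0 := by
      rw [Ilb_tree_eq i i m m'
        (lt_of_lt_of_le hrm.2 (Nat.pow_le_pow_right (by norm_num) (by omega)))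
        (lt_of_lt_of_le hrm'.2 (Nat.pow_le_pow_right (by norm_num) (by omega))),
        if_neg]
      intro hcond
      exact hcond.2.2.2.2 ⟨H - (d + 1), by omega, rfl⟩
    rw [tailP_cons (by omega)]
    refine ⟨?_, ?_, ?_⟩
    · unfold List.Chain'; rw [List.isChain_cons]
      refine ⟨?_, ihc⟩
      intro y hy
      rw [tailP_head hdH] at hy
      simp at hy; subst hy; exact hedge
    · rw [wt_cons_head _ _ _ _ (tailP_head hdH), ihw, wlb_tree]; omega
    · rw [wt_cons_head _ _ _ _ (tailP_head hdH), ihw', wlb_tree, hI]; omega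

lemma descend_len (w' : Vlb k l n × Vlb k l n → ℕ) (hw1 : ∀ e, 1 ≤ w' e)
    (j : Fin l) :
    ∀ q : List (Vlb k l n), ∀ d m,
      List.Chain' (fun a b => (a, b) ∈ Elb k l n) q →
      q.head? = some (tnode k l n j m) → q.getLast? = some (xnode k l n t) →
      d ≤ hgt k (j.val + 1) → 2 ^ d ≤ m → m < 2 ^ (d + 1) →
      hgt k (j.val + 1) - d + 1 ≤ wt w' q := by
  intro q
  induction q with
  | nil => intro d m _ hh _ _ _ _; simp at hh
  | cons a q' ih =>
    intro d m hc hh hlast hd h1 h2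
    have ha : a = tnode k l n j m := by simpa using hh
    subst ha
    cases q' with
    | nil =>
      exfalso
      have : tnode k l n j m = xnode k l n t := by simpa using hlast
      exact tnode_ne_xnode this
    | cons b r =>
      unfold List.Chain' at hc; rw [List.isChain_cons_cons] at hc
      obtain ⟨hab, hc'⟩ := hc
      rw [List.getLast?_cons_cons] at hlast
      have hmr : m < 2 ^ (hgt k (j.val + 1) + 1) :=
        lt_of_lt_of_le h2 (Nat.pow_le_pow_right (by norm_num) (by omega))
      rcases edge_from_tnode hmr hab with ⟨hm1', hmlt, m', hor, rfl⟩ | ⟨hge, x, rfl⟩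
      · have hdlt : d < hgt k (j.val + 1) := by
          by_contra hcon
          have : 2 ^ hgt k (j.val + 1) ≤ 2 ^ d :=
            Nat.pow_le_pow_right (by norm_num) (by omega)
          omega
        have hp1 : 2 ^ (d + 1) ≤ m' := by rw [pow_succ]; omega
        have hp2 : m' < 2 ^ (d + 1 + 1) := by
          rw [pow_succ]; omega
        have := ih (d + 1) m' hc' (by simp) hlast (by omega) hp1 hp2
        rw [wt_cons']
        have := hw1 (tnode k l n j m, tnode k l n j m')
        omega
      · rw [wt_cons']
        have hde : d = hgt k (j.val + 1) := by
          by_contra hcon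
          have : 2 ^ (d + 1) ≤ 2 ^ hgt k (j.val + 1) :=
            Nat.pow_le_pow_right (by norm_num) (by omega)
          omega
        have := hw1 (tnode k l n j m, xnode k l n x)
        omega

lemma descend_main (hm1 : 2 ^ hgt k (i.val + 1) ≤ mleaf)
    (hm2 : mleaf < 2 ^ (hgt k (i.val + 1) + 1)) :
    ∀ q : List (Vlb k l n), ∀ d m,
      List.Chain' (fun a b => (a, b) ∈ Elb k l n) q →
      q.head? = some (tnode k l n i m) → q.getLast? = some (xnode k l n t) →
      d ≤ hgt k (i.val + 1) → 2 ^ d ≤ m → m < 2 ^ (d + 1) →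
      mleaf / 2 ^ (hgt k (i.val + 1) - d) = m →
      q = tailP k l n i mleaf t d ∨
        hgt k (i.val + 1) - d + 2 ≤
          wt (fun p => wlb k l n p + Ilb k l n i mleaf p) q := by
  intro q
  induction q with
  | nil => intro d m _ hh _ _ _ _ _; simp at hh
  | cons a q' ih =>
    intro d m hc hh hlast hd h1 h2 hanc0
    set H := hgt k (i.val + 1) with hH
    have ha : a = tnode k l n i m := by simpa using hh
    subst ha
    cases q' with
    | nil =>
      exfalso
      have : tnode k l n i m = xnode k l n t := by simpa using hlast
      exact tnode_ne_xnode this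
    | cons b r =>
      unfold List.Chain' at hc; rw [List.isChain_cons_cons] at hc
      obtain ⟨hab, hc'⟩ := hc
      rw [List.getLast?_cons_cons] at hlast
      have hmr : m < 2 ^ (H + 1) :=
        lt_of_lt_of_le h2 (Nat.pow_le_pow_right (by norm_num) (by omega))
      rcases edge_from_tnode hmr hab with ⟨hm1', hmlt, m', hor, rfl⟩ | ⟨hge, x, rfl⟩
      · -- tree edge
        rw [← hH] at hmlt
        have hdlt : d < H := by
          by_contra hcon
          have : 2 ^ H ≤ 2 ^ d := Nat.pow_le_pow_right (by norm_num) (by omega)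
          omega
        have hp1 : 2 ^ (d + 1) ≤ m' := by rw [pow_succ]; omega
        have hp2 : m' < 2 ^ (d + 1 + 1) := by rw [pow_succ]; omega
        have hm'r : m' < 2 ^ (H + 1) :=
          lt_of_lt_of_le hp2 (Nat.pow_le_pow_right (by norm_num) (by omega))
        by_cases hanc : ∃ e ≤ H, mleaf / 2 ^ e = m'
        · obtain ⟨e, he, hme⟩ := hanc
          have hrange := div_pow_range hm1 hm2 he
          rw [hme] at hrange
          have heq : e = H - (d + 1) := by
            by_contra hne
            rcases Nat.lt_or_ge (H - e) (d + 1) with hlt | hge2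
            · have : 2 ^ (H - e + 1) ≤ 2 ^ (d + 1) :=
                Nat.pow_le_pow_right (by norm_num) (by omega)
              omega
            · have hge3 : d + 1 < H - e := by
                rcases Nat.lt_or_ge (d+1) (H-e) with h | h
                · exact h
                · exfalso; exact hne (by omega)
              have : 2 ^ (d + 1 + 1) ≤ 2 ^ (H - e) :=
                Nat.pow_le_pow_right (by norm_num) (by omega)
              omega
          rcases ih (d + 1) m' hc' (by simp) hlast (by omega) hp1 hp2
              (by rw [← heq]; exact hme) with hq' | hw
          · left
            rw [tailP_cons (by omega), hanc0, hq']
          · right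
            rw [wt_cons']
            have := wlb_ge_one (k := k) (l := l) (n := n)
              (tnode k l n i m, tnode k l n i m')
            omega
        · -- deviation edge
          right
          have hIlb : Ilb k l n i mleaf (tnode k l n i m, tnode k l n i m') = 1 := by
            rw [Ilb_tree_eq i i m m' hmr hm'r, if_pos]
            exact ⟨rfl, rfl, hor, ⟨H - d, by omega, hanc0⟩, hanc⟩
          have hlen := descend_len (fun p => wlb k l n p + Ilb k l n i mleaf p)
            (fun e => le_trans (wlb_ge_one e) (Nat.le_add_right _ _)) i
            (tnode k l n i m' :: r) (d + 1) m' hc' (by simp) hlast (by omega) hp1 hp2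
          rw [wt_cons', wlb_tree, hIlb]
          omega
      · -- leaf edge
        rw [← hH] at hge
        have hde : d = H := by
          by_contra hcon
          have : 2 ^ (d + 1) ≤ 2 ^ H := Nat.pow_le_pow_right (by norm_num) (by omega)
          omega
        have hmml : m = mleaf := by
          rw [hde] at hanc0; simp at hanc0; omega
        cases r with
        | cons c r' =>
          exfalso
          rw [List.isChain_cons_cons] at hc'
          exact edge_from_xnode hc'.1
        | nil =>
          have hxt : x = t := by
            have : xnode k l n x = xnode k l n t := by simpa using hlast
            exact xnode_inj this
          left
          rw [hde, tailP_top, hmml, hxt]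
  end AuxC

section AuxD
variable {k l n : ℕ} {i : Fin l} {mleaf : ℕ}

lemma Ilb_to_inl (a : Vlb k l n) (u : Unit) : Ilb k l n i mleaf (a, Sum.inl u) = 0 := by
  rcases a with u' | (⟨j, m⟩ | x) <;> rfl

lemma Ilb_to_x (a : Vlb k l n) (x : Fin n) :
    Ilb k l n i mleaf (a, Sum.inr (Sum.inr x)) = 0 := by
  rcases a with u' | (⟨j, m⟩ | x') <;> rfl

lemma Ilb_from_x (x : Fin n) (b : Vlb k l n) :
    Ilb k l n i mleaf (Sum.inr (Sum.inr x), b) = 0 := by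
  rcases b with u' | (⟨j, m⟩ | x') <;> rfl

lemma sum_Ilb (hkS : Ssum (i.val + 1) ≤ k)
    (hm1 : 2 ^ hgt k (i.val + 1) ≤ mleaf)
    (hm2 : mleaf < 2 ^ (hgt k (i.val + 1) + 1)) :
    ∑ p : Vlb k l n × Vlb k l n, Ilb k l n i mleaf p ≤ k := by
  classical
  set H := hgt k (i.val + 1) with hH
  -- collapse the b-sum
  have hbsum : ∀ a : Vlb k l n, ∑ b : Vlb k l n, Ilb k l n i mleaf (a, b)
      = ∑ σ' : (Σ j : Fin l, Fin (2 ^ (hgt k (j.val + 1) + 1))),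
          Ilb k l n i mleaf (a, Sum.inr (Sum.inl σ')) := by
    intro a
    simp [Fintype.sum_sum_type, Ilb_to_inl, Ilb_to_x]
  have hstep1 : ∑ p : Vlb k l n × Vlb k l n, Ilb k l n i mleaf p
      = (∑ σ' : (Σ j : Fin l, Fin (2 ^ (hgt k (j.val + 1) + 1))),
          Ilb k l n i mleaf (Sum.inl (), Sum.inr (Sum.inl σ')))
        + ∑ σ : (Σ j : Fin l, Fin (2 ^ (hgt k (j.val + 1) + 1))),
            ∑ σ' : (Σ j : Fin l, Fin (2 ^ (hgt k (j.val + 1) + 1))),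
              Ilb k l n i mleaf (Sum.inr (Sum.inl σ), Sum.inr (Sum.inl σ')) := by
    rw [Fintype.sum_prod_type]
    simp only [hbsum]
    rw [Fintype.sum_sum_type, Fintype.sum_sum_type]
    simp [Ilb_from_x]
  rw [hstep1]
  -- the source part
  have hsrc : (∑ σ' : (Σ j : Fin l, Fin (2 ^ (hgt k (j.val + 1) + 1))),
      Ilb k l n i mleaf (Sum.inl (), Sum.inr (Sum.inl σ')))
      = Ssum (i.val + 1) := by
    rw [← Finset.univ_sigma_univ, Finset.sum_sigma]
    have hrow : ∀ j : Fin l,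
        ∑ m : Fin (2 ^ (hgt k (j.val + 1) + 1)),
          Ilb k l n i mleaf (Sum.inl (), Sum.inr (Sum.inl ⟨j, m⟩))
        = if j.val < i.val then i.val + 1 - j.val else 0 := by
      intro j
      have hpf : 1 < 2 ^ (hgt k (j.val + 1) + 1) := by
        have : 2 ^ 0 < 2 ^ (hgt k (j.val + 1) + 1) :=
          Nat.pow_lt_pow_right one_lt_two (by omega)
        simpa using this
      have hr : ∀ m : Fin (2 ^ (hgt k (j.val + 1) + 1)),
          Ilb k l n i mleaf (Sum.inl (), Sum.inr (Sum.inl ⟨j, m⟩))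
          = if m.val = 1 ∧ j.val < i.val then i.val + 1 - j.val else 0 := fun m => rfl
      simp only [hr]
      rw [Finset.sum_eq_single (⟨1, hpf⟩ : Fin (2 ^ (hgt k (j.val + 1) + 1)))]
      · simp
      · intro b _ hb
        rw [if_neg]
        intro hcon
        exact hb (Fin.ext hcon.1)
      · intro h; exact absurd (Finset.mem_univ _) h
    simp only [hrow]
    rw [Fin.sum_univ_eq_sum_range (fun j => if j < i.val then i.val + 1 - j else 0) l]
    rw [← Finset.sum_range_add_sum_Ico _ (le_of_lt i.isLt)]
    have hz : ∑ j ∈ Finset.Ico i.val l, (if j < i.val then i.val + 1 - j else 0) = 0 := by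
      apply Finset.sum_eq_zero
      intro j hj
      rw [Finset.mem_Ico] at hj
      rw [if_neg (by omega)]
    rw [hz, add_zero]
    have hpos : ∑ j ∈ Finset.range i.val, (if j < i.val then i.val + 1 - j else 0)
        = ∑ j ∈ Finset.range i.val, (i.val + 1 - j) :=
      Finset.sum_congr rfl (fun j hj => if_pos (Finset.mem_range.mp hj))
    rw [hpos]
    exact sum_range_Ssum i.val
  rw [hsrc]
  -- the tree part: bounded by H
  have htree : (∑ σ : (Σ j : Fin l, Fin (2 ^ (hgt k (j.val + 1) + 1))),
      ∑ σ' : (Σ j : Fin l, Fin (2 ^ (hgt k (j.val + 1) + 1))),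
        Ilb k l n i mleaf (Sum.inr (Sum.inl σ), Sum.inr (Sum.inl σ'))) ≤ H := by
    set cond : (Σ j : Fin l, Fin (2 ^ (hgt k (j.val + 1) + 1))) ×
        (Σ j : Fin l, Fin (2 ^ (hgt k (j.val + 1) + 1))) → Prop := fun p =>
      p.1.1 = i ∧ p.2.1 = i ∧
        (p.2.2.val = 2 * p.1.2.val ∨ p.2.2.val = 2 * p.1.2.val + 1) ∧
        (∃ d ≤ hgt k (i.val + 1), mleaf / 2 ^ d = p.1.2.val) ∧
        ¬(∃ d ≤ hgt k (i.val + 1), mleaf / 2 ^ d = p.2.2.val) with hcond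
    have hpair : ∀ σ σ' : (Σ j : Fin l, Fin (2 ^ (hgt k (j.val + 1) + 1))),
        Ilb k l n i mleaf (Sum.inr (Sum.inl σ), Sum.inr (Sum.inl σ'))
        = if cond (σ, σ') then 1 else 0 := by
      rintro ⟨j, m⟩ ⟨j', m'⟩; rfl
    simp only [hpair]
    have htp : (∑ x : (Σ j : Fin l, Fin (2 ^ (hgt k (j.val + 1) + 1))),
        ∑ y : (Σ j : Fin l, Fin (2 ^ (hgt k (j.val + 1) + 1))),
          if cond (x, y) then 1 else 0)
        = ∑ p : (Σ j : Fin l, Fin (2 ^ (hgt k (j.val + 1) + 1))) ×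
            (Σ j : Fin l, Fin (2 ^ (hgt k (j.val + 1) + 1))),
            if cond p then 1 else 0 :=
      (Fintype.sum_prod_type fun p => if cond p then 1 else 0).symm
    rw [htp, Finset.sum_boole, Nat.cast_id]
    -- injection into Icc 1 H
    set F : (Σ j : Fin l, Fin (2 ^ (hgt k (j.val + 1) + 1))) ×
        (Σ j : Fin l, Fin (2 ^ (hgt k (j.val + 1) + 1))) → ℕ := fun p =>
      if hc : ∃ e, e ≤ H ∧ mleaf / 2 ^ e = p.1.2.val then hc.choose else 0 with hF
    have hFspec : ∀ p ∈ Finset.univ.filter (fun p => cond p),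
        1 ≤ F p ∧ F p ≤ H ∧ mleaf / 2 ^ (F p) = p.1.2.val := by
      intro p hp
      rw [Finset.mem_filter] at hp
      obtain ⟨-, hj1, hj2, hch, hanc, hnanc⟩ := hp
      have hanc' : ∃ e, e ≤ H ∧ mleaf / 2 ^ e = p.1.2.val := by
        obtain ⟨d, hd, hd2⟩ := hanc; exact ⟨d, hd, hd2⟩
      rw [hF]
      simp only [dif_pos hanc']
      obtain ⟨he1, he2⟩ := hanc'.choose_spec
      refine ⟨?_, he1, he2⟩
      by_contra hzero
      have hez : hanc'.choose = 0 := by omega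
      rw [hez] at he2
      simp at he2
      -- p.1.2.val = mleaf, so children are out of range
      have hlt0 : p.2.2.val < 2 ^ (hgt k ((p.2.1).val + 1) + 1) := p.2.2.isLt
      have hj2v : (p.2.1).val = i.val := by rw [hj2]
      have hlt : p.2.2.val < 2 ^ (H + 1) :=
        lt_of_lt_of_le hlt0 (le_of_eq (by rw [hj2v, ← hH]))
      have h2H : 2 ^ (H + 1) = 2 * 2 ^ H := by rw [pow_succ]; ring
      rcases hch with h | h <;> omega
    have hcard := Finset.card_le_card_of_injOn F
      (s := Finset.univ.filter (fun p => cond p)) (t := Finset.Icc 1 H)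
      (fun p hp => by
        obtain ⟨h1, h2, _⟩ := hFspec p hp
        rw [Finset.mem_coe, Finset.mem_Icc]; exact ⟨h1, h2⟩)
      (by
        intro p hp q hq hFeq
        rw [Finset.mem_coe] at hp hq
        obtain ⟨hp1, hp2, hp3⟩ := hFspec p hp
        obtain ⟨hq1, hq2, hq3⟩ := hFspec q hq
        rw [Finset.mem_filter] at hp hq
        obtain ⟨-, hpj1, hpj2, hpch, hpanc, hpnanc⟩ := hp
        obtain ⟨-, hqj1, hqj2, hqch, hqanc, hqnanc⟩ := hq
        set e := F p with he
        rw [← hFeq] at hq3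
        -- the parent of the chain element at e-1
        have hpar := div_pow_child mleaf (e - 1)
        rw [show e - 1 + 1 = e by omega] at hpar
        rw [hp3] at hpar
        have hparanc : ∃ d ≤ hgt k (i.val + 1), mleaf / 2 ^ d = mleaf / 2 ^ (e - 1) :=
          ⟨e - 1, by rw [← hH]; omega, rfl⟩
        have hpne : p.2.2.val ≠ mleaf / 2 ^ (e - 1) := by
          intro hcon; exact hpnanc (by rw [hcon]; exact hparanc)
        have hqne : q.2.2.val ≠ mleaf / 2 ^ (e - 1) := by
          intro hcon; exact hqnanc (by rw [hcon]; exact hparanc)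
        have hv1 : p.1.2.val = q.1.2.val := by omega
        have hv2 : p.2.2.val = q.2.2.val := by
          rcases hpch with h | h <;> rcases hqch with h' | h' <;>
            rcases hpar with h'' | h'' <;> omega
        -- now reconstruct equality
        rcases p with ⟨⟨j1, m1⟩, ⟨j1', m1'⟩⟩
        rcases q with ⟨⟨j2, m2⟩, ⟨j2', m2'⟩⟩
        simp only at hpj1 hpj2 hqj1 hqj2 hv1 hv2
        subst hpj1; subst hpj2; subst hqj1; subst hqj2
        simp only [Prod.mk.injEq, Sigma.mk.inj_iff, heq_eq_eq, true_and]
        exact ⟨Fin.ext hv1, Fin.ext hv2⟩)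
    have hIcc : (Finset.Icc 1 H).card = H := by
      rw [Nat.card_Icc]; omega
    omega
  have hfin : Ssum (i.val + 1) + H = k := by
    rw [hH]; unfold hgt; omega
  omega

end AuxD

/-- In the lower-bound graph, for any `t ∈ X` and the `s`-`t` path `P` through
tree `T_i` ending at leaf `mleaf`, the increment `I` has total at most `k`,
does not change the weight of `P`, and makes `P` the unique minimum-weight
`s`-`t` path, every other `s`-`t` path having weight at least `k + i + 1`. -/
theorem stmt18 (k l n : ℕ) (hk : 2 ≤ k) (hl : 1 ≤ l)
    (hle : Ssum l ≤ k) (hmax : k < Ssum (l + 1))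
    (i : Fin l) (mleaf : ℕ)
    (hm1 : 2 ^ hgt k (i.val + 1) ≤ mleaf) (hm2 : mleaf < 2 ^ (hgt k (i.val + 1) + 1))
    (t : Fin n)
    (P : List (Vlb k l n))
    (hP : P = src k l n ::
      ((List.range (hgt k (i.val + 1) + 1)).map fun dd =>
        tnode k l n i (mleaf / 2 ^ (hgt k (i.val + 1) - dd))) ++ [xnode k l n t])
    (w' : Vlb k l n × Vlb k l n → ℕ)
    (hw' : w' = fun p => wlb k l n p + Ilb k l n i mleaf p) :
    (∑ p : Vlb k l n × Vlb k l n, Ilb k l n i mleaf p ≤ k) ∧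
    IsWalk (Elb k l n) (src k l n) (xnode k l n t) P ∧
    wt w' P = wt (wlb k l n) P ∧
    (∀ q, IsWalk (Elb k l n) (src k l n) (xnode k l n t) q → q ≠ P →
      k + (i.val + 1) + 1 ≤ wt w' q ∧ wt w' P < wt w' q) := by
  subst hw'
  have hkS : Ssum (i.val + 1) ≤ k :=
    le_trans (Ssum_mono (by omega : i.val + 1 ≤ l)) hle
  have hk2 : Ssum (i.val + 1) + hgt k (i.val + 1) = k := by unfold hgt; omega
  have hPtail : P = src k l n :: tailP k l n i mleaf t 0 := by
    rw [hP]; unfold tailP; rw [List.range_eq_range']; norm_num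
  obtain ⟨chain0, w0, w'0⟩ :=
    tailP_props (t := t) hm1 hm2 (hgt k (i.val + 1)) 0 (by omega)
  have hroot : mleaf / 2 ^ (hgt k (i.val + 1)) = 1 := by
    have := div_pow_range hm1 hm2 (le_refl (hgt k (i.val + 1)))
    simp only [Nat.sub_self, pow_zero, pow_one] at this
    omega
  have hpf1 : ∀ j : Fin l, 1 < 2 ^ (hgt k (j.val + 1) + 1) := by
    intro j
    have : 2 ^ 0 < 2 ^ (hgt k (j.val + 1) + 1) :=
      Nat.pow_lt_pow_right one_lt_two (by omega)
    simpa using this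
  -- weight of P
  have hwP : wt (wlb k l n) P = Ssum (i.val + 1) + (i.val + 1) + (hgt k (i.val + 1) + 1) := by
    rw [hPtail, wt_cons_head _ _ _ _ (tailP_head (Nat.zero_le _)), w0, wlb_src]
  have hwP' : wt (fun p => wlb k l n p + Ilb k l n i mleaf p) P
      = Ssum (i.val + 1) + (i.val + 1) + (hgt k (i.val + 1) + 1) := by
    rw [hPtail, wt_cons_head _ _ _ _ (tailP_head (Nat.zero_le _)), w'0]
    simp only [Nat.sub_zero, hroot]
    rw [wlb_src, Ilb_src_eq i 1 (hpf1 i), if_neg (by simp)]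
    omega
  have hwPval : wt (fun p => wlb k l n p + Ilb k l n i mleaf p) P
      = k + (i.val + 1) + 1 := by omega
  refine ⟨sum_Ilb hkS hm1 hm2, ⟨?_, ?_, ?_⟩, by omega, ?_⟩
  · rw [hPtail]; rfl
  · rw [hPtail, tailP_cons (Nat.zero_le _), List.getLast?_cons_cons,
      ← tailP_cons (Nat.zero_le _), tailP_last]
  · rw [hPtail]; unfold List.Chain'; rw [List.isChain_cons]
    refine ⟨?_, chain0⟩
    intro y hy
    rw [tailP_head (Nat.zero_le _)] at hy
    simp only [Option.mem_def, Option.some.injEq] at hy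
    subst hy
    simp only [Nat.sub_zero, hroot]
    exact Or.inl ⟨i, rfl⟩
  · -- other walks
    intro q hq hne
    obtain ⟨hqh, hql, hqc⟩ := hq
    cases q with
    | nil => simp at hqh
    | cons a q₁ =>
      have ha : a = src k l n := by simpa using hqh
      subst ha
      cases q₁ with
      | nil =>
        exfalso
        have : src k l n = xnode k l n t := by simpa using hql
        simp [src, xnode] at this
      | cons b r =>
        unfold List.Chain' at hqc; rw [List.isChain_cons_cons] at hqc
        obtain ⟨hsb, hqc'⟩ := hqc
        rw [List.getLast?_cons_cons] at hql
        obtain ⟨j, rfl⟩ := edge_from_src hsb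
        have hW1 : ∀ e : Vlb k l n × Vlb k l n,
            1 ≤ wlb k l n e + Ilb k l n i mleaf e :=
          fun e => le_trans (wlb_ge_one e) (Nat.le_add_right _ _)
        have hlen := descend_len (fun p => wlb k l n p + Ilb k l n i mleaf p)
          hW1 j (tnode k l n j 1 :: r) 0 1 hqc' (by simp) hql (Nat.zero_le _)
          (by norm_num) (by norm_num)
        rw [wt_cons']
        have h1 : wlb k l n (src k l n, tnode k l n j 1)
              + Ilb k l n i mleaf (src k l n, tnode k l n j 1)
            = Ssum (j.val + 1) + (j.val + 1)
              + (if 1 = 1 ∧ j.val < i.val then i.val + 1 - j.val else 0) := by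
          rw [wlb_src, Ilb_src_eq j 1 (hpf1 j)]
        by_cases hji : j = i
        · subst hji
          rcases descend_main hm1 hm2 (tnode k l n j 1 :: r) 0 1 hqc' (by simp) hql
              (Nat.zero_le _) (by norm_num) (by norm_num)
              (by simpa using hroot) with heq | hge
          · exact absurd (by rw [hPtail, ← heq]) hne
          · rw [h1, if_neg (by simp)]
            constructor <;> omega
        · have hjne : j.val ≠ i.val := fun h => hji (Fin.ext h)
          by_cases hlt : j.val < i.val
          · have hSj : Ssum (j.val + 1) + hgt k (j.val + 1) = k := by
              have : Ssum (j.val + 1) ≤ k :=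
                le_trans (Ssum_mono (by omega : j.val + 1 ≤ l)) hle
              unfold hgt; omega
            rw [h1, if_pos ⟨rfl, hlt⟩]
            constructor <;> omega
          · have hSj : k ≤ Ssum (j.val + 1) + hgt k (j.val + 1) := by
              unfold hgt; omega
            rw [h1, if_neg (by omega)]
            constructor <;> omega
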